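/- The function δ ↦ δ·Φ(−δ), where Φ is the standard normal CDF, attains a unique maximum on (0, ∞); in particular it is positive on (0,∞), tends to 0 as δ → 0⁺ and as δ → ∞, and its derivative Φ(−δ) − δφ(δ) (with φ the standard normal density) has exactly one zero in (0, ∞). -/

import Mathlib

open MeasureTheory ProbabilityTheory Set Filter

/-- The standard normal CDF `Φ`. -/
noncomputable def stdNormalCDF (x : ℝ) : ℝ :=
  ((gaussianReal 0 1) (Set.Iic x)).toReal

/-- The standard normal density `φ`. -/
noncomputable def stdNormalPDF (x : ℝ) : ℝ :=
  (2 * Real.pi) ^ (-(1 : ℝ) / 2) * Real.exp (-x ^ 2 / 2)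

lemma stdNormalPDF_eq : stdNormalPDF = gaussianPDFReal 0 1 := by
  funext x
  simp only [stdNormalPDF, gaussianPDFReal, NNReal.coe_one, mul_one]
  rw [Real.rpow_def_of_pos (by positivity)]
  congr 1
  · rw [← Real.exp_log (x := (Real.sqrt (2 * Real.pi))⁻¹) (by positivity),
      Real.log_inv, Real.log_sqrt (by positivity)]
    ring_nf
  · ring_nf

lemma stdNormalPDF_pos (x : ℝ) : 0 < stdNormalPDF x := by
  rw [stdNormalPDF_eq]; exact gaussianPDFReal_pos _ _ _ one_ne_zero

lemma stdNormalPDF_integrable : MeasureTheory.Integrable stdNormalPDF := by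
  rw [stdNormalPDF_eq]; exact integrable_gaussianPDFReal 0 1

lemma stdNormalPDF_continuous : Continuous stdNormalPDF := by
  unfold stdNormalPDF; fun_prop

lemma stdNormalCDF_eq (x : ℝ) : stdNormalCDF x = ∫ t in Iic x, stdNormalPDF t := by
  rw [stdNormalCDF, gaussianReal_apply_eq_integral 0 one_ne_zero, ENNReal.toReal_ofReal,
    stdNormalPDF_eq]
  exact setIntegral_nonneg measurableSet_Iic fun t _ => gaussianPDFReal_nonneg 0 1 t

lemma stdNormalPDF_neg (x : ℝ) : stdNormalPDF (-x) = stdNormalPDF x := by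
  simp [stdNormalPDF, neg_pow]

lemma hasDerivAt_stdNormalPDF (x : ℝ) :
    HasDerivAt stdNormalPDF (-x * stdNormalPDF x) x := by
  have h : HasDerivAt (fun t : ℝ => -t ^ 2 / 2) (-x) x := by
    have h2 := (hasDerivAt_pow 2 x).neg.div_const 2
    exact h2.congr_deriv (by push_cast; ring)
  have h3 := (h.exp).const_mul ((2 * Real.pi) ^ (-(1 : ℝ) / 2))
  exact h3.congr_deriv (by simp only [stdNormalPDF]; ring)

lemma sq_tendsto_atBot : Tendsto (fun x : ℝ => x ^ 2) atBot atTop := by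
  have := (tendsto_pow_atTop (α := ℝ) (n := 2) (by norm_num)).comp tendsto_neg_atBot_atTop
  exact this.congr fun x => by simp [Function.comp, neg_sq]

lemma stdNormalPDF_tendsto_atBot : Tendsto stdNormalPDF atBot (nhds 0) := by
  have h1 : Tendsto (fun x : ℝ => -x ^ 2 / 2) atBot atBot :=
    (tendsto_neg_atTop_atBot.comp sq_tendsto_atBot).atBot_div_const two_pos
  have h2 := (Real.tendsto_exp_atBot.comp h1).const_mul ((2 * Real.pi) ^ (-(1 : ℝ) / 2))
  unfold stdNormalPDF; simpa [Function.comp, stdNormalPDF] using h2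

lemma stdNormalPDF_tendsto_atTop : Tendsto stdNormalPDF atTop (nhds 0) := by
  have h1 : Tendsto (fun x : ℝ => -x ^ 2 / 2) atTop atBot :=
    (tendsto_neg_atTop_atBot.comp (tendsto_pow_atTop (α := ℝ) (n := 2) (by norm_num))).atBot_div_const two_pos
  have h2 := (Real.tendsto_exp_atBot.comp h1).const_mul ((2 * Real.pi) ^ (-(1 : ℝ) / 2))
  unfold stdNormalPDF; simpa [Function.comp, stdNormalPDF] using h2

lemma stdNormalCDF_pos (x : ℝ) : 0 < stdNormalCDF x := by
  rw [stdNormalCDF_eq]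
  rw [setIntegral_pos_iff_support_of_nonneg_ae
    (ae_of_all _ fun t => (stdNormalPDF_pos t).le) stdNormalPDF_integrable.integrableOn]
  have : Function.support stdNormalPDF = Set.univ :=
    Set.eq_univ_of_forall fun t => (stdNormalPDF_pos t).ne'
  rw [this, Set.univ_inter]
  simp [Real.volume_Iic]

lemma stdNormalCDF_le_one (x : ℝ) : stdNormalCDF x ≤ 1 := by
  rw [stdNormalCDF_eq]
  calc ∫ t in Iic x, stdNormalPDF t ≤ ∫ t, stdNormalPDF t :=
        setIntegral_le_integral stdNormalPDF_integrable
          (ae_of_all _ fun t => (stdNormalPDF_pos t).le)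
    _ = 1 := by rw [stdNormalPDF_eq]; exact integral_gaussianPDFReal_eq_one 0 one_ne_zero

lemma hasDerivAt_stdNormalCDF (x : ℝ) : HasDerivAt stdNormalCDF (stdNormalPDF x) x := by
  have heq : ∀ y : ℝ, stdNormalCDF y = stdNormalCDF 0 + ∫ t in (0:ℝ)..y, stdNormalPDF t := by
    intro y
    rw [stdNormalCDF_eq, stdNormalCDF_eq,
      ← intervalIntegral.integral_Iic_sub_Iic stdNormalPDF_integrable.integrableOn
        stdNormalPDF_integrable.integrableOn]
    ring
  have h : HasDerivAt (fun y : ℝ => stdNormalCDF 0 + ∫ t in (0:ℝ)..y, stdNormalPDF t)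
      (stdNormalPDF x) x := by
    have := intervalIntegral.integral_hasDerivAt_right (a := (0:ℝ)) (b := x)
      (stdNormalPDF_integrable.intervalIntegrable)
      (stdNormalPDF_continuous.stronglyMeasurable.stronglyMeasurableAtFilter)
      (stdNormalPDF_continuous.continuousAt (x := x))
    exact this.const_add _
  exact h.congr_of_eventuallyEq (Eventually.of_forall heq)

lemma integrable_mul_stdNormalPDF : MeasureTheory.Integrable (fun t : ℝ => t * stdNormalPDF t) := by
  have h := integrable_mul_exp_neg_mul_sq (b := (1:ℝ)/2) (by norm_num)
  have := h.const_mul ((2 * Real.pi) ^ (-(1 : ℝ) / 2))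
  refine this.congr (ae_of_all _ fun t => ?_)
  simp only [stdNormalPDF, Real.exp_eq_exp]
  ring_nf

lemma integral_neg_mul_stdNormalPDF (a : ℝ) :
    ∫ t in Iic a, (-t * stdNormalPDF t) = stdNormalPDF a := by
  have := MeasureTheory.integral_Iic_of_hasDerivAt_of_tendsto
    (f := stdNormalPDF) (f' := fun t => -t * stdNormalPDF t) (a := a) (m := 0)
    (stdNormalPDF_continuous.continuousWithinAt)
    (fun t _ => hasDerivAt_stdNormalPDF t)
    (integrable_mul_stdNormalPDF.neg.congr (ae_of_all _ fun t => by simp)).integrableOn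
    stdNormalPDF_tendsto_atBot
  simpa using this

lemma mills (δ : ℝ) (hδ : 0 < δ) : stdNormalCDF (-δ) ≤ stdNormalPDF δ / δ := by
  have hint1 : IntegrableOn stdNormalPDF (Iic (-δ)) := stdNormalPDF_integrable.integrableOn
  have hint2 : IntegrableOn (fun t : ℝ => (-t / δ) * stdNormalPDF t) (Iic (-δ)) := by
    have := (integrable_mul_stdNormalPDF.neg.div_const δ).integrableOn (s := Iic (-δ))
    exact this.congr_fun (fun t _ => by simp [Pi.neg_apply]; ring) measurableSet_Iic
  have hle : ∫ t in Iic (-δ), stdNormalPDF t ≤ ∫ t in Iic (-δ), (-t / δ) * stdNormalPDF t := by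
    refine setIntegral_mono_on hint1 hint2 measurableSet_Iic fun t ht => ?_
    have ht' : t ≤ -δ := ht
    have h1 : (1 : ℝ) ≤ -t / δ := by
      rw [le_div_iff₀ hδ]; linarith
    nlinarith [stdNormalPDF_pos t, (stdNormalPDF_pos t).le]
  have hcalc : ∫ t in Iic (-δ), (-t / δ) * stdNormalPDF t = stdNormalPDF δ / δ := by
    have : ∀ t : ℝ, (-t / δ) * stdNormalPDF t = (-t * stdNormalPDF t) / δ := fun t => by ring
    simp_rw [this]
    rw [integral_div, integral_neg_mul_stdNormalPDF, stdNormalPDF_neg]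
  rw [stdNormalCDF_eq]
  linarith

lemma hasDerivAt_f (δ : ℝ) :
    HasDerivAt (fun δ : ℝ => δ * stdNormalCDF (-δ))
      (stdNormalCDF (-δ) - δ * stdNormalPDF δ) δ := by
  have h1 : HasDerivAt (fun δ : ℝ => stdNormalCDF (-δ)) (-stdNormalPDF δ) δ := by
    have := (hasDerivAt_stdNormalCDF (-δ)).comp δ (hasDerivAt_neg δ)
    simpa [stdNormalPDF_neg, Function.comp_def] using this
  have := (hasDerivAt_id δ).mul h1
  exact this.congr_deriv (by simp; ring)

lemma hasDerivAt_g (δ : ℝ) :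
    HasDerivAt (fun δ : ℝ => stdNormalCDF (-δ) - δ * stdNormalPDF δ)
      ((δ ^ 2 - 2) * stdNormalPDF δ) δ := by
  have h1 : HasDerivAt (fun δ : ℝ => stdNormalCDF (-δ)) (-stdNormalPDF δ) δ := by
    have := (hasDerivAt_stdNormalCDF (-δ)).comp δ (hasDerivAt_neg δ)
    simpa [stdNormalPDF_neg, Function.comp_def] using this
  have h2 : HasDerivAt (fun δ : ℝ => δ * stdNormalPDF δ)
      (stdNormalPDF δ + δ * (-δ * stdNormalPDF δ)) δ := by
    have := (hasDerivAt_id δ).mul (hasDerivAt_stdNormalPDF δ)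
    exact this.congr_deriv (by simp)
  have := h1.sub h2
  exact this.congr_deriv (by ring)

lemma one_lt_sqrt_two : (1:ℝ) < Real.sqrt 2 := by
  nlinarith [Real.sq_sqrt (by norm_num : (0:ℝ) ≤ 2), Real.sqrt_nonneg 2]

lemma g_neg_of_ge {δ : ℝ} (hδ : Real.sqrt 2 ≤ δ) :
    stdNormalCDF (-δ) - δ * stdNormalPDF δ < 0 := by
  have h1 : (1:ℝ) < δ := lt_of_lt_of_le one_lt_sqrt_two hδ
  have hm := mills δ (by linarith)
  have hp := stdNormalPDF_pos δ
  have : stdNormalPDF δ / δ < δ * stdNormalPDF δ := by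
    rw [div_lt_iff₀ (by linarith)]
    nlinarith [mul_pos hp (show (0:ℝ) < δ^2 - 1 by nlinarith)]
  linarith

lemma g_strictAntiOn :
    StrictAntiOn (fun δ : ℝ => stdNormalCDF (-δ) - δ * stdNormalPDF δ)
      (Icc 0 (Real.sqrt 2)) := by
  apply strictAntiOn_of_deriv_neg (convex_Icc _ _)
  · exact fun x _ => (hasDerivAt_g x).continuousAt.continuousWithinAt
  · intro x hx
    rw [interior_Icc] at hx
    rw [(hasDerivAt_g x).deriv]
    have hx2 : x ^ 2 < 2 := by
      nlinarith [Real.sq_sqrt (by norm_num : (0:ℝ) ≤ 2), hx.1, hx.2, Real.sqrt_nonneg 2]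
    nlinarith [stdNormalPDF_pos x]

lemma g_zero_exists : ∃ c ∈ Ioo (0:ℝ) (Real.sqrt 2),
    stdNormalCDF (-c) - c * stdNormalPDF c = 0 := by
  set g : ℝ → ℝ := fun δ => stdNormalCDF (-δ) - δ * stdNormalPDF δ with hg
  have hcont : ContinuousOn g (Icc 0 (Real.sqrt 2)) :=
    fun x _ => (hasDerivAt_g x).continuousAt.continuousWithinAt
  have h0 : 0 < g 0 := by simp [hg, stdNormalCDF_pos 0]
  have h2 : g (Real.sqrt 2) < 0 := g_neg_of_ge le_rfl
  have := intermediate_value_Ioo' (le_of_lt (by linarith [one_lt_sqrt_two] : (0:ℝ) < Real.sqrt 2)) hcont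
  have hmem : (0:ℝ) ∈ Ioo (g (Real.sqrt 2)) (g 0) := ⟨h2, h0⟩
  obtain ⟨c, hc, hgc⟩ := this hmem
  exact ⟨c, hc, hgc⟩

lemma g_unique_zero : ∃! δ : ℝ, δ ∈ Ioi (0:ℝ) ∧
    stdNormalCDF (-δ) - δ * stdNormalPDF δ = 0 := by
  obtain ⟨c, hc, hgc⟩ := g_zero_exists
  refine ⟨c, ⟨hc.1, hgc⟩, ?_⟩
  rintro d ⟨hd, hgd⟩
  by_cases hd2 : d ≤ Real.sqrt 2
  · exact g_strictAntiOn.injOn ⟨le_of_lt hd, hd2⟩ ⟨le_of_lt hc.1, le_of_lt hc.2⟩ (hgd.trans hgc.symm)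
  · exact absurd hgd (g_neg_of_ge (le_of_lt (not_le.mp hd2))).ne

lemma g_pos_of_lt {c x : ℝ} (hc : c ∈ Ioo (0:ℝ) (Real.sqrt 2))
    (hgc : stdNormalCDF (-c) - c * stdNormalPDF c = 0)
    (hx : 0 < x) (hxc : x < c) : 0 < stdNormalCDF (-x) - x * stdNormalPDF x := by
  have := g_strictAntiOn ⟨hx.le, by linarith [hc.2]⟩ ⟨hc.1.le, hc.2.le⟩ hxc
  simpa [hgc] using this

lemma g_neg_of_gt {c x : ℝ} (hc : c ∈ Ioo (0:ℝ) (Real.sqrt 2))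
    (hgc : stdNormalCDF (-c) - c * stdNormalPDF c = 0)
    (hxc : c < x) : stdNormalCDF (-x) - x * stdNormalPDF x < 0 := by
  rcases le_or_gt x (Real.sqrt 2) with h | h
  · have := g_strictAntiOn ⟨hc.1.le, hc.2.le⟩ ⟨by linarith [hc.1], h⟩ hxc
    simpa [hgc] using this
  · exact g_neg_of_ge h.le

lemma f_max {c : ℝ} (hc : c ∈ Ioo (0:ℝ) (Real.sqrt 2))
    (hgc : stdNormalCDF (-c) - c * stdNormalPDF c = 0) {x : ℝ} (hx : 0 < x) (hxc : x ≠ c) :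
    x * stdNormalCDF (-x) < c * stdNormalCDF (-c) := by
  set f : ℝ → ℝ := fun δ => δ * stdNormalCDF (-δ) with hf
  have hcont : Continuous f := by
    have : ∀ x, HasDerivAt f (stdNormalCDF (-x) - x * stdNormalPDF x) x := hasDerivAt_f
    exact continuous_iff_continuousAt.mpr fun x => (this x).continuousAt
  rcases lt_or_gt_of_ne hxc with h | h
  · have hmono : StrictMonoOn f (Icc 0 c) := by
      apply strictMonoOn_of_deriv_pos (convex_Icc _ _) hcont.continuousOn
      intro y hy
      rw [interior_Icc] at hy
      rw [(hasDerivAt_f y).deriv]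
      exact g_pos_of_lt hc hgc hy.1 hy.2
    exact hmono ⟨hx.le, h.le⟩ ⟨by linarith [hc.1], le_rfl⟩ h
  · have hanti : StrictAntiOn f (Ici c) := by
      apply strictAntiOn_of_deriv_neg (convex_Ici _) hcont.continuousOn
      intro y hy
      rw [interior_Ici] at hy
      rw [(hasDerivAt_f y).deriv]
      exact g_neg_of_gt hc hgc hy
    exact hanti (Set.mem_Ici.mpr le_rfl) (le_of_lt h) h

/-- `δ ↦ δ Φ(-δ)` attains a unique maximum on `(0,∞)`; it is positive
on `(0,∞)`, tends to `0` as `δ → 0⁺` and as `δ → ∞`, and its derivative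
`Φ(-δ) - δ φ(δ)` has exactly one zero in `(0,∞)`. -/
theorem deltaPhi_unique_max :
    (∀ δ ∈ Ioi (0 : ℝ), 0 < δ * stdNormalCDF (-δ)) ∧
    Tendsto (fun δ : ℝ => δ * stdNormalCDF (-δ)) (nhdsWithin 0 (Ioi (0 : ℝ)))
      (nhds 0) ∧
    Tendsto (fun δ : ℝ => δ * stdNormalCDF (-δ)) atTop (nhds 0) ∧
    (∀ δ ∈ Ioi (0 : ℝ),
      HasDerivAt (fun δ : ℝ => δ * stdNormalCDF (-δ))
        (stdNormalCDF (-δ) - δ * stdNormalPDF δ) δ) ∧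
    (∃! δ : ℝ, δ ∈ Ioi (0 : ℝ) ∧ stdNormalCDF (-δ) - δ * stdNormalPDF δ = 0) ∧
    (∃! δ : ℝ, δ ∈ Ioi (0 : ℝ) ∧
      ∀ x ∈ Ioi (0 : ℝ), x * stdNormalCDF (-x) ≤ δ * stdNormalCDF (-δ)) := by

  refine ⟨?_, ?_, ?_, ?_, g_unique_zero, ?_⟩
  · exact fun δ hδ => mul_pos hδ (stdNormalCDF_pos (-δ))
  · -- limit at 0+
    have hbound : ∀ᶠ δ in nhdsWithin (0:ℝ) (Ioi 0),
        |δ * stdNormalCDF (-δ)| ≤ δ := by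
      filter_upwards [self_mem_nhdsWithin] with δ (hδ : (0:ℝ) < δ)
      rw [abs_of_pos (mul_pos hδ (stdNormalCDF_pos (-δ)))]
      calc δ * stdNormalCDF (-δ) ≤ δ * 1 :=
            mul_le_mul_of_nonneg_left (stdNormalCDF_le_one (-δ)) hδ.le
        _ = δ := mul_one δ
    have hid : Tendsto (fun δ : ℝ => δ) (nhdsWithin (0:ℝ) (Ioi 0)) (nhds 0) :=
      tendsto_id.mono_left nhdsWithin_le_nhds
    exact squeeze_zero_norm' (by simpa [Real.norm_eq_abs, abs_mul] using hbound) hid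
  · -- limit at ∞
    have hbound : ∀ᶠ δ in (atTop : Filter ℝ),
        |δ * stdNormalCDF (-δ)| ≤ stdNormalPDF δ := by
      filter_upwards [eventually_gt_atTop (0:ℝ)] with δ hδ
      rw [abs_of_pos (mul_pos hδ (stdNormalCDF_pos (-δ)))]
      have := mills δ hδ
      calc δ * stdNormalCDF (-δ) ≤ δ * (stdNormalPDF δ / δ) :=
            mul_le_mul_of_nonneg_left this hδ.le
        _ = stdNormalPDF δ := by field_simp
    exact squeeze_zero_norm' (by simpa [Real.norm_eq_abs, abs_mul] using hbound) stdNormalPDF_tendsto_atTop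
  · exact fun δ _ => hasDerivAt_f δ
  · obtain ⟨c, hc, hgc⟩ := g_zero_exists
    refine ⟨c, ⟨hc.1, fun x hx => ?_⟩, ?_⟩
    · rcases eq_or_ne x c with rfl | hne
      · exact le_rfl
      · exact (f_max hc hgc hx hne).le
    · rintro d ⟨hd, hmax⟩
      by_contra hne
      have h1 := f_max hc hgc hd hne
      have h2 := hmax c hc.1
      linarith
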